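/- Let P : [0,∞) → ℝ be continuously differentiable with P(0) = 0, P'(Z) > 0 for all Z ≥ 0, (5/3)P(Z) − Z P'(Z) > 0 for all Z > 0, and p_∞ := lim_{Z→∞} P(Z)/Z^{5/3} > 0, and let a > 0. Define e(ρ,θ) = (3/2)(θ^{5/2}/ρ) P(ρ θ^{−3/2}) + (a/ρ)θ⁴ for ρ > 0, θ > 0. Then there exists c₀ > 0 such that ρ·e(ρ,θ) ≥ c₀·(ρ^{5/3} + θ⁴) for all ρ > 0 and θ > 0. -/

import Mathlib

open Set Filter Topology

/-- Coercivity of the internal energy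
`e(ρ,θ) = (3/2) (θ^(5/2)/ρ) P(ρ θ^(-3/2)) + (a/ρ) θ⁴`:
there is `c₀ > 0` with `ρ e(ρ,θ) ≥ c₀ (ρ^(5/3) + θ⁴)`. -/
theorem stmt5 (P : ℝ → ℝ) (a pinf : ℝ)
    (hP : ContDiffOn ℝ 1 P (Set.Ici 0))
    (hP0 : P 0 = 0)
    (hP' : ∀ Z : ℝ, 0 ≤ Z → 0 < derivWithin P (Set.Ici 0) Z)
    (hPZ : ∀ Z : ℝ, 0 < Z → 0 < (5 / 3) * P Z - Z * derivWithin P (Set.Ici 0) Z)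
    (hlim : Tendsto (fun Z : ℝ => P Z / Z ^ ((5 : ℝ) / 3)) atTop (𝓝 pinf))
    (hpinf : 0 < pinf) (ha : 0 < a) :
    ∃ c₀ : ℝ, 0 < c₀ ∧ ∀ ρ θ : ℝ, 0 < ρ → 0 < θ →
      c₀ * (ρ ^ ((5 : ℝ) / 3) + θ ^ 4) ≤
        ρ * ((3 / 2) * (θ ^ ((5 : ℝ) / 2) / ρ) * P (ρ * θ ^ (-(3 : ℝ) / 2)) + (a / ρ) * θ ^ 4) := by
  have hdiff : ∀ x : ℝ, 0 < x → HasDerivAt P (derivWithin P (Set.Ici 0) x) x := by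
    intro x hx
    have h1 : DifferentiableWithinAt ℝ P (Set.Ici 0) x :=
      (hP.differentiableOn one_ne_zero) x (le_of_lt hx)
    exact h1.hasDerivWithinAt.hasDerivAt (Ici_mem_nhds hx)
  set g : ℝ → ℝ := fun Z => P Z / Z ^ ((5 : ℝ) / 3) with hg
  have hgd : ∀ x : ℝ, 0 < x → HasDerivAt g
      ((derivWithin P (Set.Ici 0) x * x ^ ((5:ℝ)/3)
        - P x * ((5:ℝ)/3 * x ^ ((5:ℝ)/3 - 1))) / (x ^ ((5:ℝ)/3)) ^ 2) x := by
    intro x hx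
    exact (hdiff x hx).div (Real.hasDerivAt_rpow_const (Or.inl hx.ne')) (by positivity)
  have hganti : StrictAntiOn g (Set.Ioi 0) := by
    apply strictAntiOn_of_deriv_neg (convex_Ioi 0)
    · intro x hx
      exact ((hgd x hx).differentiableAt).continuousAt.continuousWithinAt
    · intro x hx
      rw [interior_Ioi] at hx
      replace hx : 0 < x := hx
      rw [(hgd x hx).deriv]
      apply div_neg_of_neg_of_pos _ (by positivity)
      have h53 : x ^ ((5:ℝ)/3) = x * x ^ ((5:ℝ)/3 - 1) := by
        rw [show (5:ℝ)/3 = 1 + ((5:ℝ)/3 - 1) by ring, Real.rpow_add hx, Real.rpow_one]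
        norm_num
      rw [h53]
      have h2 : (0:ℝ) < x ^ ((5:ℝ)/3 - 1) := by positivity
      have h3 := hPZ x hx
      nlinarith [h2, h3]
  have hkey : ∀ Z : ℝ, 0 < Z → pinf * Z ^ ((5:ℝ)/3) ≤ P Z := by
    intro Z hZ
    have h1 : pinf ≤ g Z := by
      refine le_of_tendsto hlim ?_
      filter_upwards [eventually_ge_atTop Z] with W hW
      rcases eq_or_lt_of_le hW with h | h
      · rw [← h]
      · exact (hganti hZ (hZ.trans h) h).le
    have h2 : (0:ℝ) < Z ^ ((5:ℝ)/3) := by positivity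
    have h3 : g Z * Z ^ ((5:ℝ)/3) = P Z := div_mul_cancel₀ _ h2.ne'
    nlinarith [mul_le_mul_of_nonneg_right h1 h2.le]
  refine ⟨min pinf a, lt_min hpinf ha, ?_⟩
  intro ρ θ hρ hθ
  set Z : ℝ := ρ * θ ^ (-(3:ℝ)/2) with hZdef
  have hZ : 0 < Z := by positivity
  have hPZ' := hkey Z hZ
  have hrw : θ ^ ((5:ℝ)/2) * Z ^ ((5:ℝ)/3) = ρ ^ ((5:ℝ)/3) := by
    rw [hZdef, Real.mul_rpow hρ.le (by positivity), ← Real.rpow_mul hθ.le]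
    rw [show θ ^ ((5:ℝ)/2) * (ρ ^ ((5:ℝ)/3) * θ ^ (-3/2*((5:ℝ)/3)))
        = ρ ^ ((5:ℝ)/3) * (θ ^ ((5:ℝ)/2) * θ ^ (-3/2*((5:ℝ)/3))) by ring,
      ← Real.rpow_add hθ]
    norm_num
  have hRHS : ρ * ((3 / 2) * (θ ^ ((5 : ℝ) / 2) / ρ) * P Z + (a / ρ) * θ ^ 4)
      = (3/2) * θ ^ ((5:ℝ)/2) * P Z + a * θ ^ 4 := by
    field_simp
  rw [hRHS]
  have h1 : pinf * ρ ^ ((5:ℝ)/3) ≤ (3/2) * θ ^ ((5:ℝ)/2) * P Z := by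
    have hθ52 : (0:ℝ) < θ ^ ((5:ℝ)/2) := by positivity
    calc pinf * ρ ^ ((5:ℝ)/3) = pinf * (θ ^ ((5:ℝ)/2) * Z ^ ((5:ℝ)/3)) := by rw [hrw]
      _ ≤ (3/2) * (θ ^ ((5:ℝ)/2) * (pinf * Z ^ ((5:ℝ)/3))) := by nlinarith [mul_pos hpinf (mul_pos hθ52 (show (0:ℝ) < Z ^ ((5:ℝ)/3) by positivity))]
      _ ≤ (3/2) * (θ ^ ((5:ℝ)/2) * P Z) := by nlinarith [mul_le_mul_of_nonneg_left hPZ' hθ52.le]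
      _ = (3/2) * θ ^ ((5:ℝ)/2) * P Z := by ring
  have h2 : min pinf a * ρ ^ ((5:ℝ)/3) ≤ pinf * ρ ^ ((5:ℝ)/3) :=
    mul_le_mul_of_nonneg_right (min_le_left _ _) (by positivity)
  have h3 : min pinf a * θ ^ 4 ≤ a * θ ^ 4 :=
    mul_le_mul_of_nonneg_right (min_le_right _ _) (by positivity)
  nlinarith [h1, h2, h3]
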